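/- In the scalar case d = 1: suppose Y = X ᵀβ(Ũ) a.s. with Ũ ~ U(0,1), E[X|Ũ] = E[X], and t ↦ xᵀβ(t) strictly increasing on (0,1) for x in the support of X; and suppose also Y = Xᵀβ̄(Ū) a.s. with Ū ~ U(0,1), E[X|Ū] = E[X], and t ↦ xᵀβ̄(t) strictly increasing. Then Ũ = Ū a.s. and Xᵀβ(Ũ) = Xᵀβ̄(Ū) a.s. -/

import Mathlib

open MeasureTheory Matrix Set

/-- dot product with a fixed vector as a continuous linear map -/
lemma exists_dot_clm {p : ℕ} (v : Fin p → ℝ) :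
    ∃ L : (Fin p → ℝ) →L[ℝ] ℝ, ∀ x, L x = x ⬝ᵥ v := by
  refine ⟨∑ i, v i • ContinuousLinearMap.proj i, fun x => ?_⟩
  simp [dotProduct, mul_comm]

/-- Theorem 3.3(ii), scalar case: the quasi-linear representation of a scalar outcome
via a uniform rank, strictly increasing in the rank and mean independent of the
regressors, is almost surely unique. -/
theorem stmt12 {p : ℕ} {Ω : Type*} [MeasurableSpace Ω] (P : Measure Ω)
    [IsProbabilityMeasure P]
    (β βb : ℝ → (Fin p → ℝ)) (X : Ω → (Fin p → ℝ)) (Y : Ω → ℝ) (Ut Ub : Ω → ℝ)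
    (hXmeas : Measurable X) (hUtmeas : Measurable Ut) (hUbmeas : Measurable Ub)
    (hX2 : ∀ i, Integrable (fun ω => (X ω i) ^ 2) P)
    (hUtlaw : Measure.map Ut P = volume.restrict (Set.Ioo (0:ℝ) 1))
    (hUblaw : Measure.map Ub P = volume.restrict (Set.Ioo (0:ℝ) 1))
    (hUtmem : ∀ ω, Ut ω ∈ Set.Ioo (0:ℝ) 1) (hUbmem : ∀ ω, Ub ω ∈ Set.Ioo (0:ℝ) 1)
    (hmono : ∀ᵐ ω ∂P, StrictMonoOn (fun t => X ω ⬝ᵥ β t) (Set.Ioo (0:ℝ) 1))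
    (hmonob : ∀ᵐ ω ∂P, StrictMonoOn (fun t => X ω ⬝ᵥ βb t) (Set.Ioo (0:ℝ) 1))
    (hYrep : ∀ᵐ ω ∂P, Y ω = X ω ⬝ᵥ β (Ut ω))
    (hYrepb : ∀ᵐ ω ∂P, Y ω = X ω ⬝ᵥ βb (Ub ω))
    (hMIUt : ∀ g : ℝ → ℝ, Measurable g → (∃ C, ∀ v, |g v| ≤ C) →
      ∫ ω, g (Ut ω) • X ω ∂P = (∫ ω, g (Ut ω) ∂P) • ∫ ω, X ω ∂P)
    (hMIUb : ∀ g : ℝ → ℝ, Measurable g → (∃ C, ∀ v, |g v| ≤ C) →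
      ∫ ω, g (Ub ω) • X ω ∂P = (∫ ω, g (Ub ω) ∂P) • ∫ ω, X ω ∂P) :
    (∀ᵐ ω ∂P, Ut ω = Ub ω) ∧
    (∀ᵐ ω ∂P, X ω ⬝ᵥ β (Ut ω) = X ω ⬝ᵥ βb (Ub ω)) := by
  -- coordinates of X are integrable
  have hXi_meas : ∀ i, Measurable fun ω => X ω i := fun i => (measurable_pi_apply i).comp hXmeas
  have hXi : ∀ i, Integrable (fun ω => X ω i) P := by
    intro i
    refine ((hX2 i).add (integrable_const 1)).mono' (hXi_meas i).aestronglyMeasurable ?_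
    filter_upwards with ω
    have h1 : |X ω i| ≤ (X ω i)^2 + 1 := by nlinarith [sq_nonneg (|X ω i| - 1), sq_abs (X ω i)]
    simpa [Real.norm_eq_abs] using h1
  -- X is integrable as a vector valued map
  have hsum : ∀ (h : Ω → ℝ), (∀ i, Integrable (fun ω => h ω * X ω i) P) →
      Integrable (fun ω => h ω • X ω) P := by
    intro h hi
    have heq : (fun ω => h ω • X ω) = fun ω => ∑ i, (h ω * X ω i) • ((Pi.single i (1:ℝ)) : Fin p → ℝ) := by
      funext ω j
      simp [Finset.sum_apply, Pi.single_apply, mul_comm]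
    rw [heq]
    exact integrable_finset_sum _ fun i _ => (hi i).smul_const _
  have hXint : Integrable X P := by
    have := hsum (fun _ => 1) (fun i => by simpa using hXi i)
    simpa using this
  have hdotint : ∀ v : Fin p → ℝ, Integrable (fun ω => X ω ⬝ᵥ v) P := by
    intro v
    obtain ⟨L, hL⟩ := exists_dot_clm v
    simpa [hL] using L.integrable_comp hXint
  -- scalar consequence of mean independence
  have MI : ∀ (U : Ω → ℝ), Measurable U →
      (∀ g : ℝ → ℝ, Measurable g → (∃ C, ∀ v, |g v| ≤ C) →
        ∫ ω, g (U ω) • X ω ∂P = (∫ ω, g (U ω) ∂P) • ∫ ω, X ω ∂P) →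
      ∀ (g : ℝ → ℝ), Measurable g → (∀ v, |g v| ≤ 1) → ∀ (v : Fin p → ℝ),
      ∫ ω, g (U ω) * (X ω ⬝ᵥ v) ∂P = (∫ ω, g (U ω) ∂P) * ((∫ ω, X ω ∂P) ⬝ᵥ v) := by
    intro U hU hMI g hg hb v
    obtain ⟨L, hL⟩ := exists_dot_clm v
    have hint : Integrable (fun ω => g (U ω) • X ω) P := by
      refine hsum _ fun i => (hXi i).bdd_mul (c := 1) ((hg.comp hU).aestronglyMeasurable) (Filter.Eventually.of_forall fun ω => ?_)
      simpa [Real.norm_eq_abs] using hb (U ω)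
    have h1 : ∀ ω, g (U ω) * (X ω ⬝ᵥ v) = L (g (U ω) • X ω) := by
      intro ω; rw [L.map_smul]; simp [hL]
    simp_rw [h1]
    rw [L.integral_comp_comm hint, hMI g hg ⟨1, hb⟩, L.map_smul, hL]
    simp
  -- equality of the two one-dimensional pushforwards
  have hlaweq : ∀ (g : ℝ → ℝ), Measurable g →
      ∫ ω, g (Ut ω) ∂P = ∫ ω, g (Ub ω) ∂P := by
    intro g hg
    rw [← integral_map hUtmeas.aemeasurable hg.aestronglyMeasurable,
      ← integral_map hUbmeas.aemeasurable hg.aestronglyMeasurable, hUtlaw, hUblaw]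
  -- key step: for each u ∈ (0,1), the events {Ut ≤ u} and {Ub ≤ u} agree a.s.
  have key : ∀ u ∈ Ioo (0:ℝ) 1, ∀ᵐ ω ∂P, (Ut ω ≤ u ↔ Ub ω ≤ u) := by
    intro u hu
    set g : ℝ → ℝ := (Iic u).indicator (fun _ => (1:ℝ)) with hgdef
    have hgmeas : Measurable g := measurable_const.indicator measurableSet_Iic
    have hgbd : ∀ v, |g v| ≤ 1 := by
      intro v
      by_cases h : v ≤ u <;> simp [hgdef, indicator_apply, h]
    have hgval : ∀ v, g v = if v ≤ u then 1 else 0 := by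
      intro v; simp [hgdef, indicator_apply]
    set d : Fin p → ℝ := β u - βb u with hddef
    set F : Ω → ℝ := fun ω => (g (Ut ω) - g (Ub ω)) * (X ω ⬝ᵥ d) with hFdef
    have hFint : Integrable F P := by
      refine (hdotint d).bdd_mul (c := 2) ?_ (Filter.Eventually.of_forall fun ω => ?_)
      · exact (((hgmeas.comp hUtmeas).sub (hgmeas.comp hUbmeas))).aestronglyMeasurable
      · have := hgbd (Ut ω); have := hgbd (Ub ω)
        simp only [Real.norm_eq_abs]
        calc |g (Ut ω) - g (Ub ω)| ≤ |g (Ut ω)| + |g (Ub ω)| := abs_sub _ _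
        _ ≤ 2 := by linarith [hgbd (Ut ω), hgbd (Ub ω)]
    have hFzero : ∫ ω, F ω ∂P = 0 := by
      have hsplit : ∀ ω, F ω = g (Ut ω) * (X ω ⬝ᵥ d) - g (Ub ω) * (X ω ⬝ᵥ d) := by
        intro ω; simp [hFdef]; ring
      simp_rw [hsplit]
      rw [integral_sub, MI Ut hUtmeas hMIUt g hgmeas hgbd d, MI Ub hUbmeas hMIUb g hgmeas hgbd d,
        hlaweq g hgmeas]
      · ring
      · exact (hdotint d).bdd_mul (c := 1) ((hgmeas.comp hUtmeas).aestronglyMeasurable)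
          (Filter.Eventually.of_forall (f := ae P) fun ω => by simpa [Real.norm_eq_abs] using hgbd (Ut ω))
      · exact (hdotint d).bdd_mul (c := 1) ((hgmeas.comp hUbmeas).aestronglyMeasurable)
          (Filter.Eventually.of_forall (f := ae P) fun ω => by simpa [Real.norm_eq_abs] using hgbd (Ub ω))
    have hiff : ∀ᵐ ω ∂P, (Ut ω ≤ u ↔ Y ω ≤ X ω ⬝ᵥ β u) ∧ (Ub ω ≤ u ↔ Y ω ≤ X ω ⬝ᵥ βb u) := by
      filter_upwards [hmono, hmonob, hYrep, hYrepb] with ω h1 h2 h3 h4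
      constructor
      · rw [h3]; exact ⟨fun h => h1.monotoneOn (hUtmem ω) hu h,
          fun h => by by_contra hc; push_neg at hc; exact absurd h (not_le.2 (h1 hu (hUtmem ω) hc))⟩
      · rw [h4]; exact ⟨fun h => h2.monotoneOn (hUbmem ω) hu h,
          fun h => by by_contra hc; push_neg at hc; exact absurd h (not_le.2 (h2 hu (hUbmem ω) hc))⟩
    have hFnonneg : 0 ≤ᵐ[P] F := by
      filter_upwards [hiff] with ω hw
      obtain ⟨h1, h2⟩ := hw
      have hd : X ω ⬝ᵥ d = X ω ⬝ᵥ β u - X ω ⬝ᵥ βb u := by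
        rw [hddef, dotProduct_sub]
      have hgoal : (0:ℝ) ≤ (g (Ut ω) - g (Ub ω)) * (X ω ⬝ᵥ d) := by
        rw [hd, hgval, hgval]
        by_cases ha : Ut ω ≤ u <;> by_cases hb : Ub ω ≤ u
        · simp [ha, hb]
        · have hay := h1.1 ha
          have hby : X ω ⬝ᵥ βb u < Y ω := by
            by_contra hc; push_neg at hc; exact hb (h2.2 hc)
          rw [if_pos ha, if_neg hb]
          nlinarith
        · have hby := h2.1 hb
          have hay : X ω ⬝ᵥ β u < Y ω := by
            by_contra hc; push_neg at hc; exact ha (h1.2 hc)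
          rw [if_neg ha, if_pos hb]
          nlinarith
        · simp [ha, hb]
      simpa [hFdef] using hgoal
    have hFae : F =ᵐ[P] 0 := (integral_eq_zero_iff_of_nonneg_ae hFnonneg hFint).1 hFzero
    filter_upwards [hFae, hiff] with ω hF0 hw
    obtain ⟨h1, h2⟩ := hw
    have hd : X ω ⬝ᵥ d = X ω ⬝ᵥ β u - X ω ⬝ᵥ βb u := by
      rw [hddef, dotProduct_sub]
    have hF0' : (g (Ut ω) - g (Ub ω)) * (X ω ⬝ᵥ d) = 0 := by
      simpa [hFdef] using hF0
    rcases mul_eq_zero.1 hF0' with h | h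
    · have hg0 : g (Ut ω) = g (Ub ω) := by linarith
      rw [hgval, hgval] at hg0
      by_cases ha : Ut ω ≤ u <;> by_cases hb : Ub ω ≤ u
      · exact iff_of_true ha hb
      · rw [if_pos ha, if_neg hb] at hg0; norm_num at hg0
      · rw [if_neg ha, if_pos hb] at hg0; norm_num at hg0
      · exact iff_of_false ha hb
    · have heq : X ω ⬝ᵥ β u = X ω ⬝ᵥ βb u := by rw [hd] at h; linarith
      rw [h1, h2, heq]
  -- combine over rationals
  have keyQ : ∀ᵐ ω ∂P, ∀ q : ℚ, (q:ℝ) ∈ Ioo (0:ℝ) 1 → (Ut ω ≤ q ↔ Ub ω ≤ q) := by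
    rw [ae_all_iff]
    intro q
    by_cases hq : (q:ℝ) ∈ Ioo (0:ℝ) 1
    · filter_upwards [key q hq] with ω h _; exact h
    · filter_upwards with ω h; exact absurd h hq
  constructor
  · filter_upwards [keyQ] with ω h
    by_contra hne
    rcases lt_or_gt_of_ne hne with hlt | hlt
    · obtain ⟨q, hq1, hq2⟩ := exists_rat_btwn hlt
      have hqI : (q:ℝ) ∈ Ioo (0:ℝ) 1 := ⟨lt_trans (hUtmem ω).1 hq1, lt_trans hq2 (hUbmem ω).2⟩
      have := (h q hqI).1 hq1.le
      linarith
    · obtain ⟨q, hq1, hq2⟩ := exists_rat_btwn hlt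
      have hqI : (q:ℝ) ∈ Ioo (0:ℝ) 1 := ⟨lt_trans (hUbmem ω).1 hq1, lt_trans hq2 (hUtmem ω).2⟩
      have := (h q hqI).2 hq1.le
      linarith
  · filter_upwards [hYrep, hYrepb] with ω h1 h2
    rw [← h1, ← h2]
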